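/- If Π is a cut-free, identity-free proof of a sequent Γ in unit-only multiplicative linear logic and Π ⇒ λ (λ is a translation of Π), then (Γ, λ) is a proof net, i.e. λ is a correct linking for Γ. -/

import Mathlib

namespace MLL

/-- Formulas of unit-only MLL, with every connective and unit occurrence
carrying a name (a natural number). -/
inductive Formula : Type
  | one : ℕ → Formula
  | bot : ℕ → Formula
  | parr : ℕ → Formula → Formula → Formula
  | tens : ℕ → Formula → Formula → Formula
deriving DecidableEq

namespace Formula

/-- The name of the root connective/unit of a formula. -/
def name : Formula → ℕ
  | one n => n
  | bot n => n
  | parr n _ _ => n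
  | tens n _ _ => n

/-- All names occurring in a formula. -/
def names : Formula → Finset ℕ
  | one n => {n}
  | bot n => {n}
  | parr n A B => insert n (A.names ∪ B.names)
  | tens n A B => insert n (A.names ∪ B.names)

/-- All subformula occurrences of a formula. -/
def subs : Formula → List Formula
  | one n => [one n]
  | bot n => [bot n]
  | parr n A B => parr n A B :: (A.subs ++ B.subs)
  | tens n A B => tens n A B :: (A.subs ++ B.subs)

end Formula

/-- A sequent is a multiset of (named) formulas. -/
abbrev Sequent := Multiset Formula

/-- The names occurring in a sequent. -/
def seqNames (Γ : Sequent) : Finset ℕ := (Γ.map Formula.names).sup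

/-- The subformula occurrences of a sequent. -/
def seqSubs (Γ : Sequent) : Multiset Formula :=
  Γ.bind (fun A => (A.subs : Multiset Formula))

/-- `A` is a subformula occurrence of `Γ`. -/
def HasSub (Γ : Sequent) (A : Formula) : Prop := A ∈ seqSubs Γ

/-- `a` is the name of a `⊥`-occurrence of `Γ`. -/
def IsBotName (Γ : Sequent) (a : ℕ) : Prop := HasSub Γ (.bot a)

/-- `a` is the name of a `1`-occurrence of `Γ`. -/
def IsOneName (Γ : Sequent) (a : ℕ) : Prop := HasSub Γ (.one a)

/-- The sequent is well-named: all occurrences carry pairwise distinct names. -/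
def WellNamed (Γ : Sequent) : Prop := ((seqSubs Γ).map Formula.name).Nodup

/-- A linking: a function assigning to (the name of) each `⊥`-occurrence
a target name (the jump). -/
abbrev Linking := ℕ → ℕ

/-- A switching: a choice of left/right for each par occurrence. -/
abbrev Switching := ℕ → Bool

/-- The linking sends (names of) `⊥`-occurrences to names of `Γ`. -/
def ValidLinking (Γ : Sequent) (lk : Linking) : Prop :=
  ∀ a, IsBotName Γ a → lk a ∈ seqNames Γ

/-- The edges of the switching graph for `Γ`, `lk` and the switching `σ`. -/
def switchAdj (Γ : Sequent) (lk : Linking) (σ : Switching) (x y : ℕ) : Prop :=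
  (∃ A B, HasSub Γ (.tens x A B) ∧ (y = A.name ∨ y = B.name)) ∨
  (∃ A B, HasSub Γ (.parr x A B) ∧ y = (if σ x then A.name else B.name)) ∨
  (IsBotName Γ x ∧ y = lk x)

/-- The switching graph for `Γ`, `lk` and `σ`. -/
def switchGraph (Γ : Sequent) (lk : Linking) (σ : Switching) : SimpleGraph ℕ :=
  SimpleGraph.fromRel (switchAdj Γ lk σ)

/-- Correctness of a linking: every switching graph (restricted to the names of `Γ`)
is acyclic and connected, i.e. a tree.  `(Γ, lk)` is a proof net iff `Correct Γ lk`. -/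
def Correct (Γ : Sequent) (lk : Linking) : Prop :=
  ValidLinking Γ lk ∧
  ∀ σ : Switching, ((switchGraph Γ lk σ).induce {x : ℕ | x ∈ seqNames Γ}).IsTree

/-- All jumps of the linking target `1`-occurrences. -/
def TargetsOnes (Γ : Sequent) (lk : Linking) : Prop :=
  ∀ a, IsBotName Γ a → IsOneName Γ (lk a)

/-- Two correct linkings describe the same proof net (they agree on all jumps). -/
def SameNet (Γ : Sequent) (lk lk' : Linking) : Prop :=
  Correct Γ lk ∧ Correct Γ lk' ∧ ∀ a, IsBotName Γ a → lk a = lk' a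

/-- A rewiring step between proof nets: the target of exactly one jump is changed. -/
def Rewire (Γ : Sequent) (lk lk' : Linking) : Prop :=
  Correct Γ lk ∧ Correct Γ lk' ∧
  ∃ a, IsBotName Γ a ∧ lk a ≠ lk' a ∧ ∀ b, IsBotName Γ b → b ≠ a → lk b = lk' b

/-- Equivalence of proof nets over `Γ`: the equivalence relation generated by rewiring. -/
def NetEquiv (Γ : Sequent) : Linking → Linking → Prop :=
  Relation.EqvGen (fun lk lk' => SameNet Γ lk lk' ∨ Rewire Γ lk lk')

end MLL

namespace MLL

/-- Cut-free, identity-free sequent proofs of unit-only MLL. -/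
inductive Proof : Sequent → Type
  | one (n : ℕ) : Proof {Formula.one n}
  | bot (n : ℕ) {Γ : Sequent} : Proof Γ → Proof (Formula.bot n ::ₘ Γ)
  | parr (n : ℕ) {Γ : Sequent} {A B : Formula} :
      Proof (A ::ₘ B ::ₘ Γ) → Proof (Formula.parr n A B ::ₘ Γ)
  | tens (n : ℕ) {Γ Δ : Sequent} {A B : Formula} :
      Proof (A ::ₘ Γ) → Proof (B ::ₘ Δ) → Proof (Formula.tens n A B ::ₘ (Γ + Δ))

/-- The translation relation `Π ⇒ λ` from proofs to linkings: for each
`⊥`-occurrence named `a`, `λ a` is a name in the context of the `(⊥)`-inference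
introducing `a`. -/
inductive Translates : {Γ : Sequent} → Proof Γ → Linking → Prop
  | one {n : ℕ} {lk : Linking} : Translates (Proof.one n) lk
  | bot {Γ : Sequent} {n : ℕ} {π : Proof Γ} {lk : Linking} :
      lk n ∈ seqNames Γ → Translates π lk → Translates (Proof.bot n π) lk
  | parr {Γ : Sequent} {A B : Formula} {n : ℕ} {π : Proof (A ::ₘ B ::ₘ Γ)} {lk : Linking} :
      Translates π lk → Translates (Proof.parr n π) lk
  | tens {Γ Δ : Sequent} {A B : Formula} {n : ℕ} {π₁ : Proof (A ::ₘ Γ)}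
      {π₂ : Proof (B ::ₘ Δ)} {lk : Linking} :
      Translates π₁ lk → Translates π₂ lk → Translates (Proof.tens n π₁ π₂) lk

end MLL


section AuxGraph

namespace MLLAux

open SimpleGraph Walk

variable {V : Type*} [DecidableEq V] {G G' : SimpleGraph V}

/-- No cycle of `G` has all its vertices inside `s`. -/
def NoCycOn (G : SimpleGraph V) (s : Set V) : Prop :=
  ∀ ⦃v : V⦄ (c : G.Walk v v), c.IsCycle → ¬ (∀ x ∈ c.support, x ∈ s)

/-- All vertices of `s` are reachable from one another in `G`. -/
def ReachOn (G : SimpleGraph V) (s : Set V) : Prop :=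
  ∀ ⦃x : V⦄, x ∈ s → ∀ ⦃y : V⦄, y ∈ s → G.Reachable x y

lemma mem_support_of_mem_edge {u v : V} {p : G.Walk u v} {e : Sym2 V}
    (he : e ∈ p.edges) {x : V} (hx : x ∈ e) : x ∈ p.support := by
  induction e using Sym2.ind with
  | _ c d =>
    rcases Sym2.mem_iff.mp hx with rfl | rfl
    · exact p.fst_mem_support_of_mem_edges he
    · exact p.snd_mem_support_of_mem_edges he

lemma first_edge {w x : V} (q : G.Walk w x) (hq : q.support.Nodup) {e : Sym2 V}
    (he : e ∈ q.edges) (hwe : w ∈ e) :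
    ∃ (y : V) (h : G.Adj w y) (r : G.Walk y x), q = Walk.cons h r ∧ e = s(w, y) := by
  cases q with
  | nil => simp at he
  | @cons _ y _ h r =>
    rcases List.mem_cons.mp (by simpa using he) with rfl | he'
    · exact ⟨y, h, r, rfl, rfl⟩
    · exfalso
      have hws : w ∈ r.support := mem_support_of_mem_edge he' hwe
      rw [support_cons, List.nodup_cons] at hq
      exact hq.1 hws

lemma mem_support_exists_edge :
    ∀ {v w : V} (q : G.Walk v w) {x : V}, x ∈ q.support →
      x = w ∨ ∃ e ∈ q.edges, x ∈ e := by
  intro v w q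
  induction q with
  | nil => intro x hx; left; simpa using hx
  | @cons a b c h r ih =>
    intro x hx
    rw [support_cons] at hx
    rcases List.mem_cons.mp hx with rfl | hx'
    · right
      refine ⟨s(x, b), ?_, Sym2.mem_mk_left _ _⟩
      rw [edges_cons]; exact List.mem_cons_self
    · rcases ih hx' with rfl | ⟨e, he, hxe⟩
      · left; rfl
      · right
        refine ⟨e, ?_, hxe⟩
        rw [edges_cons]; exact List.mem_cons_of_mem _ he

/-- In a walk starting inside `s₁`, if the unique crossing edge `s(a,b)` is never
used, the walk stays in `s₁`. -/
lemma stay {s₁ s₂ : Set V} {a b : V}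
    (hd : ∀ x, x ∈ s₁ → x ∈ s₂ → False) (hb : b ∈ s₂)
    (hE : ∀ ⦃x y⦄, G.Adj x y → x ∈ s₁ ∪ s₂ → y ∈ s₁ ∪ s₂ →
      (x ∈ s₁ ∧ y ∈ s₁) ∨ (x ∈ s₂ ∧ y ∈ s₂) ∨ s(x, y) = s(a, b)) :
    ∀ {u w : V} (p : G.Walk u w), u ∈ s₁ → (∀ x ∈ p.support, x ∈ s₁ ∪ s₂) →
      s(a, b) ∉ p.edges → ∀ x ∈ p.support, x ∈ s₁ := by
  intro u w p
  induction p with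
  | nil =>
    intro hu _ _ x hx
    simp only [support_nil, List.mem_singleton] at hx
    subst hx; exact hu
  | @cons u' v' w' h q ih =>
    intro hu hsup hne x hx
    have hv : v' ∈ s₁ := by
      rcases hE h (hsup u' (by simp)) (hsup v' (by simp)) with ⟨_, hv⟩ | ⟨hu2, _⟩ | hpair
      · exact hv
      · exact absurd hu2 (fun h2 => hd u' hu h2)
      · rcases Sym2.eq_iff.mp hpair with ⟨rfl, rfl⟩ | ⟨rfl, rfl⟩
        · exact absurd (by simp : s(u', v') ∈ (Walk.cons h q).edges) hne
        · exact absurd hb (fun h2 => hd u' hu h2)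
    rcases List.mem_cons.mp (by simpa using hx) with rfl | hx'
    · exact hu
    · exact ih hv (fun z hz => hsup z (by simp [hz]))
        (fun hmem => hne (by simp [hmem])) x hx'

/-- A cycle through `a` that uses the unique crossing edge `s(a,b)` is impossible. -/
lemma cycle_at_crossing_false {s₁ s₂ : Set V} {a b : V}
    (hd : ∀ x, x ∈ s₁ → x ∈ s₂ → False) (ha : a ∈ s₁) (hb : b ∈ s₂)
    (hE : ∀ ⦃x y⦄, G.Adj x y → x ∈ s₁ ∪ s₂ → y ∈ s₁ ∪ s₂ →
      (x ∈ s₁ ∧ y ∈ s₁) ∨ (x ∈ s₂ ∧ y ∈ s₂) ∨ s(x, y) = s(a, b)) :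
    ∀ (c : G.Walk a a), c.IsCycle → s(a, b) ∈ c.edges →
      (∀ x ∈ c.support, x ∈ s₁ ∪ s₂) → False := by
  have hE' : ∀ ⦃x y⦄, G.Adj x y → x ∈ s₂ ∪ s₁ → y ∈ s₂ ∪ s₁ →
      (x ∈ s₂ ∧ y ∈ s₂) ∨ (x ∈ s₁ ∧ y ∈ s₁) ∨ s(x, y) = s(b, a) := by
    intro x y hxy hx hy
    rcases hE hxy (Set.union_comm s₂ s₁ ▸ hx) (Set.union_comm s₂ s₁ ▸ hy) with
      h | h | h
    · exact Or.inr (Or.inl h)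
    · exact Or.inl h
    · exact Or.inr (Or.inr (h.trans Sym2.eq_swap))
  have hd' : ∀ x, x ∈ s₂ → x ∈ s₁ → False := fun x h2 h1 => hd x h1 h2
  intro c hc hab hsup
  cases c with
  | nil => exact Walk.IsCycle.not_of_nil hc
  | @cons _ v _ h p =>
    have hcyc := (Walk.cons_isCycle_iff p h).mp hc
    have hab' : a ≠ b := fun hh => hd a ha (by rw [hh]; exact hb)
    have hpsup : ∀ x ∈ p.support, x ∈ s₁ ∪ s₂ := fun x hx => hsup x (by simp [hx])
    by_cases hv : v = b
    · have hnab : s(b, a) ∉ p.edges := by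
        intro hmem
        apply hcyc.2
        have heq2 : s(a, v) = s(b, a) := by rw [hv, Sym2.eq_swap]
        rw [heq2]
        exact hmem
      have hvb : v ∈ s₂ := by rw [hv]; exact hb
      have hstay := stay hd' ha hE' p hvb
        (fun x hx => Set.union_comm s₂ s₁ ▸ hpsup x hx) hnab
      exact hd a ha (hstay a p.end_mem_support)
    · have hv1 : v ∈ s₁ := by
        rcases hE h (hsup a (by simp)) (hsup v (by simp)) with ⟨_, h'⟩ | ⟨h2, _⟩ | hpair
        · exact h'
        · exact absurd h2 (fun h2 => hd a ha h2)
        · rcases Sym2.eq_iff.mp hpair with ⟨_, h2⟩ | ⟨h1, _⟩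
          · exact absurd h2 hv
          · exact absurd h1 (fun hh => hd a ha (by rw [hh]; exact hb))
      have habp : s(a, b) ∈ p.edges := by
        rw [Walk.edges_cons] at hab
        rcases List.mem_cons.mp hab with heq | h'
        · exfalso
          rcases Sym2.eq_iff.mp heq with ⟨_, h2⟩ | ⟨_, h2⟩
          · exact hv h2.symm
          · exact hab' h2.symm
        · exact h'
      have hrev_nodup : p.reverse.support.Nodup := hcyc.1.reverse.support_nodup
      have habr : s(a, b) ∈ p.reverse.edges := by
        rw [Walk.edges_reverse, List.mem_reverse]; exact habp
      obtain ⟨y, hadj, r, heq, hey⟩ :=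
        first_edge p.reverse hrev_nodup habr (Sym2.mem_mk_left a b)
      have hyb : b = y := by
        rcases Sym2.eq_iff.mp hey with ⟨_, h'⟩ | ⟨_, h2⟩
        · exact h'
        · exact absurd h2.symm hab'
      subst hyb
      have htrail : p.reverse.edges.Nodup := hcyc.1.reverse.edges_nodup
      have hnot : s(a, b) ∉ r.edges := by
        rw [heq, Walk.edges_cons, List.nodup_cons] at htrail
        exact htrail.1
      have hrsup : ∀ x ∈ r.support, x ∈ s₂ ∪ s₁ := by
        intro x hx
        have : x ∈ p.reverse.support := by rw [heq, support_cons]; simp [hx]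
        rw [Walk.support_reverse, List.mem_reverse] at this
        exact Set.union_comm s₂ s₁ ▸ hpsup x this
      have hnot' : s(b, a) ∉ r.edges := by
        rw [Sym2.eq_swap]; exact hnot
      have hstay := stay hd' ha hE' r hb hrsup hnot'
      have : v ∈ s₂ := hstay v r.end_mem_support
      exact hd v hv1 this

lemma noCycOn_union {s₁ s₂ : Set V} {a b : V}
    (hd : ∀ x, x ∈ s₁ → x ∈ s₂ → False) (ha : a ∈ s₁) (hb : b ∈ s₂)
    (hE : ∀ ⦃x y⦄, G.Adj x y → x ∈ s₁ ∪ s₂ → y ∈ s₁ ∪ s₂ →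
      (x ∈ s₁ ∧ y ∈ s₁) ∨ (x ∈ s₂ ∧ y ∈ s₂) ∨ s(x, y) = s(a, b))
    (h₁ : NoCycOn G s₁) (h₂ : NoCycOn G s₂) : NoCycOn G (s₁ ∪ s₂) := by
  have hd' : ∀ x, x ∈ s₂ → x ∈ s₁ → False := fun x h2 h1 => hd x h1 h2
  have hE' : ∀ ⦃x y⦄, G.Adj x y → x ∈ s₂ ∪ s₁ → y ∈ s₂ ∪ s₁ →
      (x ∈ s₂ ∧ y ∈ s₂) ∨ (x ∈ s₁ ∧ y ∈ s₁) ∨ s(x, y) = s(b, a) := by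
    intro x y hxy hx hy
    rcases hE hxy (Set.union_comm s₂ s₁ ▸ hx) (Set.union_comm s₂ s₁ ▸ hy) with
      h | h | h
    · exact Or.inr (Or.inl h)
    · exact Or.inl h
    · exact Or.inr (Or.inr (h.trans Sym2.eq_swap))
  intro v c hc hsup
  by_cases hab : s(a, b) ∈ c.edges
  · have hamem : a ∈ c.support := c.fst_mem_support_of_mem_edges hab
    have hc₂ : (c.rotate a hamem).IsCycle := hc.rotate hamem
    have hedge_mem : ∀ e ∈ (c.rotate a hamem).edges, e ∈ c.edges :=
      fun e he => ((c.rotate_edges a hamem).perm.mem_iff).mp he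
    have hab₂ : s(a, b) ∈ (c.rotate a hamem).edges :=
      ((c.rotate_edges a hamem).perm.mem_iff).mpr hab
    have hnotnil : (c.rotate a hamem) ≠ Walk.nil := hc₂.ne_nil
    have hsup₂ : ∀ x ∈ (c.rotate a hamem).support, x ∈ s₁ ∪ s₂ := by
      intro x hx
      rcases mem_support_exists_edge (c.rotate a hamem) hx with rfl | ⟨e, he, hxe⟩
      · exact Or.inl ha
      · exact hsup x (mem_support_of_mem_edge (hedge_mem e he) hxe)
    exact cycle_at_crossing_false hd ha hb hE (c.rotate a hamem) hc₂ hab₂ hsup₂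
  · rcases hsup v c.start_mem_support with hv | hv
    · exact h₁ c hc (stay hd hb hE c hv hsup hab)
    · refine h₂ c hc (stay hd' ha hE' c hv
        (fun x hx => Set.union_comm s₂ s₁ ▸ hsup x hx) ?_)
      rw [Sym2.eq_swap]; exact hab

lemma noCycOn_singleton (G : SimpleGraph V) (v : V) : NoCycOn G {v} := by
  intro u c hc hsup
  cases c with
  | nil => exact Walk.IsCycle.not_of_nil hc
  | @cons _ x _ h q =>
    have hu : u = v := hsup u (by simp)
    have hx : x = v := hsup x (by simp)
    subst hu; subst hx
    exact G.irrefl h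

lemma reachOn_singleton (G : SimpleGraph V) (v : V) : ReachOn G {v} := by
  intro x hx y hy
  have hx' : x = v := hx
  have hy' : y = v := hy
  rw [hx', hy']

lemma isAcyclic_of_noCycOn {s : Set V} (hE : ∀ ⦃x y⦄, G.Adj x y → x ∈ s ∧ y ∈ s)
    (h : NoCycOn G s) : G.IsAcyclic := by
  intro v c hc
  refine h c hc ?_
  intro x hx
  rcases mem_support_exists_edge c hx with rfl | ⟨e, he, hxe⟩
  · cases c with
    | nil => exact absurd rfl hc.ne_nil
    | cons hadj q => exact (hE hadj).1
  · have hes : e ∈ G.edgeSet := Walk.edges_subset_edgeSet _ he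
    revert hes hxe
    induction e using Sym2.ind with
    | _ c d =>
      intro hxe hes
      rw [SimpleGraph.mem_edgeSet] at hes
      rcases Sym2.mem_iff.mp hxe with rfl | rfl
      · exact (hE hes).1
      · exact (hE hes).2

lemma noCycOn_of_agree {G G' : SimpleGraph V} {s : Set V}
    (hagree : ∀ ⦃x y⦄, x ∈ s → y ∈ s → G'.Adj x y → G.Adj x y)
    (h : G.IsAcyclic) : NoCycOn G' s := by
  intro v c hc hsup
  have hedges : ∀ e ∈ c.edges, e ∈ G.edgeSet := by
    intro e
    induction e using Sym2.ind with
    | _ x y =>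
      intro he
      have hx : x ∈ s := hsup x (c.fst_mem_support_of_mem_edges he)
      have hy : y ∈ s := hsup y (c.snd_mem_support_of_mem_edges he)
      have : G'.Adj x y := by
        have := Walk.edges_subset_edgeSet c he
        rwa [SimpleGraph.mem_edgeSet] at this
      exact (SimpleGraph.mem_edgeSet _).mpr (hagree hx hy this)
  exact h (c.transfer G hedges) (hc.transfer hedges)

lemma reachOn_mono {G G' : SimpleGraph V} {s : Set V}
    (hle : ∀ ⦃x y⦄, G.Adj x y → G'.Adj x y) (h : ReachOn G s) : ReachOn G' s :=
  fun x hx y hy => (h hx hy).mono (fun _ _ hadj => hle hadj)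

lemma reachOn_union {s₁ s₂ : Set V} {a b : V} (ha : a ∈ s₁) (hb : b ∈ s₂)
    (hab : G.Reachable a b) (h₁ : ReachOn G s₁) (h₂ : ReachOn G s₂) :
    ReachOn G (s₁ ∪ s₂) := by
  have key : ∀ ⦃x⦄, x ∈ s₁ ∪ s₂ → G.Reachable x a := by
    intro x hx
    rcases hx with hx | hx
    · exact h₁ hx ha
    · exact (h₂ hx hb).trans hab.symm
  intro x hx y hy
  exact (key hx).trans (key hy).symm

lemma reachable_induce {G : SimpleGraph V} {s : Set V}
    (hE : ∀ ⦃x y⦄, G.Adj x y → x ∈ s ∧ y ∈ s) :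
    ∀ {x y : V} (_ : G.Walk x y) (hx : x ∈ s) (hy : y ∈ s),
      (G.induce s).Reachable ⟨x, hx⟩ ⟨y, hy⟩ := by
  intro x y p
  induction p with
  | nil => intro hx hy; exact Reachable.refl _
  | @cons u v w h q ih =>
    intro hx hy
    have hv : v ∈ s := (hE h).2
    have hadj : (G.induce s).Adj ⟨u, hx⟩ ⟨v, hv⟩ := by
      simp only [SimpleGraph.comap_adj, Function.Embedding.coe_subtype]
      exact h
    exact hadj.reachable.trans (ih hv hy)

lemma isAcyclic_induce {G : SimpleGraph V} {s : Set V} (h : G.IsAcyclic) :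
    (G.induce s).IsAcyclic := by
  intro v c hc
  have f := SimpleGraph.Embedding.induce (G := G) s
  exact h (c.map f.toHom) (hc.map f.injective)

end MLLAux

end AuxGraph

namespace MLL

open Formula

lemma self_mem_subs (A : Formula) : A ∈ A.subs := by
  cases A <;> simp [Formula.subs]

lemma subs_trans : ∀ {A S T : Formula}, S ∈ A.subs → T ∈ S.subs → T ∈ A.subs := by
  intro A
  induction A with
  | one n =>
    intro S T hS hT
    simp only [Formula.subs, List.mem_singleton] at hS
    subst hS; simpa [Formula.subs] using hT
  | bot n =>
    intro S T hS hT
    simp only [Formula.subs, List.mem_singleton] at hS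
    subst hS; simpa [Formula.subs] using hT
  | parr n A B ihA ihB =>
    intro S T hS hT
    simp only [Formula.subs, List.mem_cons, List.mem_append] at hS ⊢
    rcases hS with rfl | hS | hS
    · simpa [Formula.subs] using hT
    · exact Or.inr (Or.inl (ihA hS hT))
    · exact Or.inr (Or.inr (ihB hS hT))
  | tens n A B ihA ihB =>
    intro S T hS hT
    simp only [Formula.subs, List.mem_cons, List.mem_append] at hS ⊢
    rcases hS with rfl | hS | hS
    · simpa [Formula.subs] using hT
    · exact Or.inr (Or.inl (ihA hS hT))
    · exact Or.inr (Or.inr (ihB hS hT))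

lemma name_mem_names (A : Formula) : A.name ∈ A.names := by
  cases A <;> simp [Formula.name, Formula.names]

lemma mem_names_iff {A : Formula} {x : ℕ} :
    x ∈ A.names ↔ ∃ S ∈ A.subs, S.name = x := by
  induction A with
  | one n => simp [Formula.names, Formula.subs, Formula.name, eq_comm]
  | bot n => simp [Formula.names, Formula.subs, Formula.name, eq_comm]
  | parr n A B ihA ihB =>
    simp only [Formula.names, Formula.subs, Finset.mem_insert, Finset.mem_union,
      List.mem_cons, List.mem_append, ihA, ihB]
    constructor
    · rintro (rfl | ⟨S, hS, rfl⟩ | ⟨S, hS, rfl⟩)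
      · exact ⟨Formula.parr x A B, Or.inl rfl, rfl⟩
      · exact ⟨S, Or.inr (Or.inl hS), rfl⟩
      · exact ⟨S, Or.inr (Or.inr hS), rfl⟩
    · rintro ⟨S, (rfl | hS | hS), rfl⟩
      · exact Or.inl rfl
      · exact Or.inr (Or.inl ⟨S, hS, rfl⟩)
      · exact Or.inr (Or.inr ⟨S, hS, rfl⟩)
  | tens n A B ihA ihB =>
    simp only [Formula.names, Formula.subs, Finset.mem_insert, Finset.mem_union,
      List.mem_cons, List.mem_append, ihA, ihB]
    constructor
    · rintro (rfl | ⟨S, hS, rfl⟩ | ⟨S, hS, rfl⟩)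
      · exact ⟨Formula.tens x A B, Or.inl rfl, rfl⟩
      · exact ⟨S, Or.inr (Or.inl hS), rfl⟩
      · exact ⟨S, Or.inr (Or.inr hS), rfl⟩
    · rintro ⟨S, (rfl | hS | hS), rfl⟩
      · exact Or.inl rfl
      · exact Or.inr (Or.inl ⟨S, hS, rfl⟩)
      · exact Or.inr (Or.inr ⟨S, hS, rfl⟩)

lemma seqSubs_cons (A : Formula) (Γ : Sequent) :
    seqSubs (A ::ₘ Γ) = (A.subs : Multiset Formula) + seqSubs Γ :=
  Multiset.cons_bind _ _ _

lemma seqSubs_add (Γ Δ : Sequent) : seqSubs (Γ + Δ) = seqSubs Γ + seqSubs Δ :=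
  Multiset.add_bind _ _ _

lemma seqNames_cons (A : Formula) (Γ : Sequent) :
    seqNames (A ::ₘ Γ) = A.names ∪ seqNames Γ := by
  simp [seqNames, Multiset.sup_cons]

lemma seqNames_add (Γ Δ : Sequent) : seqNames (Γ + Δ) = seqNames Γ ∪ seqNames Δ := by
  simp [seqNames, Multiset.sup_add]

lemma mem_seqNames {Γ : Sequent} {x : ℕ} :
    x ∈ seqNames Γ ↔ ∃ S, HasSub Γ S ∧ S.name = x := by
  induction Γ using Multiset.induction with
  | empty => simp [seqNames, HasSub, seqSubs]
  | cons A Γ ih =>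
    simp only [seqNames_cons, Finset.mem_union, ih, HasSub, seqSubs_cons,
      Multiset.mem_add, mem_names_iff, Multiset.mem_coe]
    constructor
    · rintro (⟨S, hS, rfl⟩ | ⟨S, hS, rfl⟩)
      · exact ⟨S, Or.inl hS, rfl⟩
      · exact ⟨S, Or.inr hS, rfl⟩
    · rintro ⟨S, hS | hS, rfl⟩
      · exact Or.inl ⟨S, hS, rfl⟩
      · exact Or.inr ⟨S, hS, rfl⟩

lemma hasSub_name_mem {Γ : Sequent} {S : Formula} (h : HasSub Γ S) :
    S.name ∈ seqNames Γ := mem_seqNames.mpr ⟨S, h, rfl⟩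

lemma hasSub_of_mem_subs {Γ : Sequent} {S T : Formula}
    (h : HasSub Γ S) (hT : T ∈ S.subs) : HasSub Γ T := by
  obtain ⟨C, hC, hS⟩ := Multiset.mem_bind.mp h
  exact Multiset.mem_bind.mpr ⟨C, hC, Multiset.mem_coe.mpr
    (subs_trans (Multiset.mem_coe.mp hS) hT)⟩

lemma hasSub_tens_left {Γ : Sequent} {n : ℕ} {A B : Formula}
    (h : HasSub Γ (Formula.tens n A B)) : HasSub Γ A :=
  hasSub_of_mem_subs h (by simp [Formula.subs, self_mem_subs])

lemma hasSub_tens_right {Γ : Sequent} {n : ℕ} {A B : Formula}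
    (h : HasSub Γ (Formula.tens n A B)) : HasSub Γ B :=
  hasSub_of_mem_subs h (by simp [Formula.subs, self_mem_subs])

lemma hasSub_parr_left {Γ : Sequent} {n : ℕ} {A B : Formula}
    (h : HasSub Γ (Formula.parr n A B)) : HasSub Γ A :=
  hasSub_of_mem_subs h (by simp [Formula.subs, self_mem_subs])

lemma hasSub_parr_right {Γ : Sequent} {n : ℕ} {A B : Formula}
    (h : HasSub Γ (Formula.parr n A B)) : HasSub Γ B :=
  hasSub_of_mem_subs h (by simp [Formula.subs, self_mem_subs])

lemma seqSubs_bot (n : ℕ) (Γ : Sequent) :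
    seqSubs (Formula.bot n ::ₘ Γ) = Formula.bot n ::ₘ seqSubs Γ := by
  rw [seqSubs_cons]
  simp [Formula.subs]

lemma seqSubs_parr (n : ℕ) (A B : Formula) (Γ : Sequent) :
    seqSubs (Formula.parr n A B ::ₘ Γ)
      = Formula.parr n A B ::ₘ seqSubs (A ::ₘ B ::ₘ Γ) := by
  rw [seqSubs_cons, seqSubs_cons, seqSubs_cons]
  simp [Formula.subs, ← Multiset.cons_coe, ← Multiset.coe_add, Multiset.cons_add, add_assoc]

lemma seqSubs_tens (n : ℕ) (A B : Formula) (Γ Δ : Sequent) :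
    seqSubs (Formula.tens n A B ::ₘ (Γ + Δ))
      = Formula.tens n A B ::ₘ (seqSubs (A ::ₘ Γ) + seqSubs (B ::ₘ Δ)) := by
  rw [seqSubs_cons, seqSubs_add, seqSubs_cons, seqSubs_cons]
  simp only [Formula.subs, ← Multiset.cons_coe, ← Multiset.coe_add, Multiset.cons_add]
  rw [add_add_add_comm]


lemma seqNames_bot (n : ℕ) (Γ : Sequent) :
    seqNames (Formula.bot n ::ₘ Γ) = insert n (seqNames Γ) := by
  rw [seqNames_cons]
  simp [Formula.names]

lemma seqNames_parr (n : ℕ) (A B : Formula) (Γ : Sequent) :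
    seqNames (Formula.parr n A B ::ₘ Γ) = insert n (seqNames (A ::ₘ B ::ₘ Γ)) := by
  rw [seqNames_cons, seqNames_cons, seqNames_cons]
  simp only [Formula.names]
  ext x
  simp only [Finset.mem_union, Finset.mem_insert]
  tauto

lemma seqNames_tens (n : ℕ) (A B : Formula) (Γ Δ : Sequent) :
    seqNames (Formula.tens n A B ::ₘ (Γ + Δ))
      = insert n (seqNames (A ::ₘ Γ) ∪ seqNames (B ::ₘ Δ)) := by
  rw [seqNames_cons, seqNames_add, seqNames_cons, seqNames_cons]
  simp only [Formula.names]
  ext x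
  simp only [Finset.mem_union, Finset.mem_insert]
  tauto

lemma mem_seqNames_iff_mem_map {Γ : Sequent} {x : ℕ} :
    x ∈ seqNames Γ ↔ x ∈ (seqSubs Γ).map Formula.name := by
  rw [mem_seqNames]
  simp only [Multiset.mem_map, HasSub]

lemma wellNamed_bot {n : ℕ} {Γ : Sequent} (hW : WellNamed (Formula.bot n ::ₘ Γ)) :
    WellNamed Γ ∧ n ∉ seqNames Γ := by
  rw [WellNamed, seqSubs_bot, Multiset.map_cons, Multiset.nodup_cons] at hW
  refine ⟨hW.2, fun hn => hW.1 ?_⟩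
  exact mem_seqNames_iff_mem_map.mp hn

lemma wellNamed_parr {n : ℕ} {A B : Formula} {Γ : Sequent}
    (hW : WellNamed (Formula.parr n A B ::ₘ Γ)) :
    WellNamed (A ::ₘ B ::ₘ Γ) ∧ n ∉ seqNames (A ::ₘ B ::ₘ Γ) := by
  rw [WellNamed, seqSubs_parr, Multiset.map_cons, Multiset.nodup_cons] at hW
  refine ⟨hW.2, fun hn => hW.1 ?_⟩
  exact mem_seqNames_iff_mem_map.mp hn

lemma wellNamed_tens {n : ℕ} {A B : Formula} {Γ Δ : Sequent}
    (hW : WellNamed (Formula.tens n A B ::ₘ (Γ + Δ))) :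
    WellNamed (A ::ₘ Γ) ∧ WellNamed (B ::ₘ Δ) ∧ n ∉ seqNames (A ::ₘ Γ) ∧
      n ∉ seqNames (B ::ₘ Δ) ∧
      ∀ x, x ∈ seqNames (A ::ₘ Γ) → x ∈ seqNames (B ::ₘ Δ) → False := by
  rw [WellNamed, seqSubs_tens, Multiset.map_cons, Multiset.nodup_cons,
    Multiset.map_add, Multiset.nodup_add] at hW
  obtain ⟨hn, h1, h2, hdisj⟩ := hW
  refine ⟨h1, h2, fun hmem => hn ?_, fun hmem => hn ?_, fun x hx1 hx2 => ?_⟩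
  · exact Multiset.mem_add.mpr (Or.inl (mem_seqNames_iff_mem_map.mp hmem))
  · exact Multiset.mem_add.mpr (Or.inr (mem_seqNames_iff_mem_map.mp hmem))
  · exact Multiset.disjoint_left.mp hdisj (mem_seqNames_iff_mem_map.mp hx1)
      (mem_seqNames_iff_mem_map.mp hx2)

lemma switchAdj_mono {Γ Γ' : Sequent} {lk : Linking} {σ : Switching} {x y : ℕ}
    (hsub : ∀ S, HasSub Γ S → HasSub Γ' S) (h : switchAdj Γ lk σ x y) :
    switchAdj Γ' lk σ x y := by
  rcases h with ⟨A, B, hs, hy⟩ | ⟨A, B, hs, hy⟩ | ⟨hb, hy⟩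
  · exact Or.inl ⟨A, B, hsub _ hs, hy⟩
  · exact Or.inr (Or.inl ⟨A, B, hsub _ hs, hy⟩)
  · exact Or.inr (Or.inr ⟨hsub _ hb, hy⟩)

lemma classify_bot {n : ℕ} {Γ : Sequent} {lk : Linking} {σ : Switching}
    (hv : ValidLinking Γ lk) :
    ∀ {x y : ℕ}, switchAdj (Formula.bot n ::ₘ Γ) lk σ x y →
      (x ∈ seqNames Γ ∧ y ∈ seqNames Γ ∧ switchAdj Γ lk σ x y) ∨
        (x = n ∧ y = lk n) := by
  intro x y h
  have hsub : ∀ S, HasSub (Formula.bot n ::ₘ Γ) S → S = Formula.bot n ∨ HasSub Γ S := by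
    intro S hS
    rw [HasSub, seqSubs_bot, Multiset.mem_cons] at hS
    exact hS
  rcases h with ⟨A, B, hs, hy⟩ | ⟨A, B, hs, hy⟩ | ⟨hb, hy⟩
  · rcases hsub _ hs with h' | h'
    · exact absurd h' (by simp)
    · refine Or.inl ⟨hasSub_name_mem h', ?_, Or.inl ⟨A, B, h', hy⟩⟩
      rcases hy with rfl | rfl
      · exact hasSub_name_mem (hasSub_tens_left h')
      · exact hasSub_name_mem (hasSub_tens_right h')
  · rcases hsub _ hs with h' | h'
    · exact absurd h' (by simp)
    · refine Or.inl ⟨hasSub_name_mem h', ?_, Or.inr (Or.inl ⟨A, B, h', hy⟩)⟩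
      subst hy
      by_cases hσ : σ x
      · simp only [hσ, if_true]
        exact hasSub_name_mem (hasSub_parr_left h')
      · simp only [hσ, if_false]
        exact hasSub_name_mem (hasSub_parr_right h')
  · rcases hsub _ hb with h' | h'
    · have hx : x = n := by injection h'
      exact Or.inr ⟨hx, by rw [hy, hx]⟩
    · exact Or.inl ⟨hasSub_name_mem h', by rw [hy]; exact hv x h',
        Or.inr (Or.inr ⟨h', hy⟩)⟩

lemma classify_parr {n : ℕ} {A B : Formula} {Γ : Sequent} {lk : Linking} {σ : Switching}
    (hv : ValidLinking (A ::ₘ B ::ₘ Γ) lk) :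
    ∀ {x y : ℕ}, switchAdj (Formula.parr n A B ::ₘ Γ) lk σ x y →
      (x ∈ seqNames (A ::ₘ B ::ₘ Γ) ∧ y ∈ seqNames (A ::ₘ B ::ₘ Γ) ∧
        switchAdj (A ::ₘ B ::ₘ Γ) lk σ x y) ∨
      (x = n ∧ y = (if σ n then A.name else B.name)) := by
  intro x y h
  have hsub : ∀ S, HasSub (Formula.parr n A B ::ₘ Γ) S →
      S = Formula.parr n A B ∨ HasSub (A ::ₘ B ::ₘ Γ) S := by
    intro S hS
    rw [HasSub, seqSubs_parr, Multiset.mem_cons] at hS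
    exact hS
  have hA : HasSub (A ::ₘ B ::ₘ Γ) A := by
    rw [HasSub, seqSubs_cons]
    exact Multiset.mem_add.mpr (Or.inl (Multiset.mem_coe.mpr (self_mem_subs A)))
  have hB : HasSub (A ::ₘ B ::ₘ Γ) B := by
    rw [HasSub, seqSubs_cons, seqSubs_cons]
    refine Multiset.mem_add.mpr (Or.inr (Multiset.mem_add.mpr
      (Or.inl (Multiset.mem_coe.mpr (self_mem_subs B)))))
  rcases h with ⟨C, D, hs, hy⟩ | ⟨C, D, hs, hy⟩ | ⟨hb, hy⟩
  · rcases hsub _ hs with h' | h'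
    · exact absurd h' (by simp)
    · refine Or.inl ⟨hasSub_name_mem h', ?_, Or.inl ⟨C, D, h', hy⟩⟩
      rcases hy with rfl | rfl
      · exact hasSub_name_mem (hasSub_tens_left h')
      · exact hasSub_name_mem (hasSub_tens_right h')
  · rcases hsub _ hs with h' | h'
    · have : x = n ∧ C = A ∧ D = B := by
        refine ⟨?_, ?_, ?_⟩ <;> injection h'
      obtain ⟨rfl, rfl, rfl⟩ := this
      exact Or.inr ⟨rfl, hy⟩
    · refine Or.inl ⟨hasSub_name_mem h', ?_, Or.inr (Or.inl ⟨C, D, h', hy⟩)⟩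
      subst hy
      by_cases hσ : σ x
      · simp only [hσ, if_true]
        exact hasSub_name_mem (hasSub_parr_left h')
      · simp only [hσ, if_false]
        exact hasSub_name_mem (hasSub_parr_right h')
  · rcases hsub _ hb with h' | h'
    · exact absurd h' (by simp)
    · exact Or.inl ⟨hasSub_name_mem h', by rw [hy]; exact hv x h',
        Or.inr (Or.inr ⟨h', hy⟩)⟩

lemma classify_tens {n : ℕ} {A B : Formula} {Γ Δ : Sequent} {lk : Linking} {σ : Switching}
    (hv₁ : ValidLinking (A ::ₘ Γ) lk) (hv₂ : ValidLinking (B ::ₘ Δ) lk) :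
    ∀ {x y : ℕ}, switchAdj (Formula.tens n A B ::ₘ (Γ + Δ)) lk σ x y →
      (x ∈ seqNames (A ::ₘ Γ) ∧ y ∈ seqNames (A ::ₘ Γ) ∧ switchAdj (A ::ₘ Γ) lk σ x y) ∨
      (x ∈ seqNames (B ::ₘ Δ) ∧ y ∈ seqNames (B ::ₘ Δ) ∧ switchAdj (B ::ₘ Δ) lk σ x y) ∨
      (x = n ∧ (y = A.name ∨ y = B.name)) := by
  intro x y h
  have hsub : ∀ S, HasSub (Formula.tens n A B ::ₘ (Γ + Δ)) S →
      S = Formula.tens n A B ∨ HasSub (A ::ₘ Γ) S ∨ HasSub (B ::ₘ Δ) S := by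
    intro S hS
    rw [HasSub, seqSubs_tens, Multiset.mem_cons, Multiset.mem_add] at hS
    exact hS
  rcases h with ⟨C, D, hs, hy⟩ | ⟨C, D, hs, hy⟩ | ⟨hb, hy⟩
  · rcases hsub _ hs with h' | h' | h'
    · have : x = n ∧ C = A ∧ D = B := by
        refine ⟨?_, ?_, ?_⟩ <;> injection h'
      obtain ⟨rfl, rfl, rfl⟩ := this
      refine Or.inr (Or.inr ⟨rfl, ?_⟩)
      rcases hy with rfl | rfl
      · exact Or.inl rfl
      · exact Or.inr rfl
    · refine Or.inl ⟨hasSub_name_mem h', ?_, Or.inl ⟨C, D, h', hy⟩⟩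
      rcases hy with rfl | rfl
      · exact hasSub_name_mem (hasSub_tens_left h')
      · exact hasSub_name_mem (hasSub_tens_right h')
    · refine Or.inr (Or.inl ⟨hasSub_name_mem h', ?_, Or.inl ⟨C, D, h', hy⟩⟩)
      rcases hy with rfl | rfl
      · exact hasSub_name_mem (hasSub_tens_left h')
      · exact hasSub_name_mem (hasSub_tens_right h')
  · rcases hsub _ hs with h' | h' | h'
    · exact absurd h' (by simp)
    · refine Or.inl ⟨hasSub_name_mem h', ?_, Or.inr (Or.inl ⟨C, D, h', hy⟩)⟩
      subst hy
      by_cases hσ : σ x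
      · simp only [hσ, if_true]
        exact hasSub_name_mem (hasSub_parr_left h')
      · simp only [hσ, if_false]
        exact hasSub_name_mem (hasSub_parr_right h')
    · refine Or.inr (Or.inl ⟨hasSub_name_mem h', ?_, Or.inr (Or.inl ⟨C, D, h', hy⟩)⟩)
      subst hy
      by_cases hσ : σ x
      · simp only [hσ, if_true]
        exact hasSub_name_mem (hasSub_parr_left h')
      · simp only [hσ, if_false]
        exact hasSub_name_mem (hasSub_parr_right h')
  · rcases hsub _ hb with h' | h' | h'
    · exact absurd h' (by simp)
    · exact Or.inl ⟨hasSub_name_mem h', by rw [hy]; exact hv₁ x h',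
        Or.inr (Or.inr ⟨h', hy⟩)⟩
    · exact Or.inr (Or.inl ⟨hasSub_name_mem h', by rw [hy]; exact hv₂ x h',
        Or.inr (Or.inr ⟨h', hy⟩)⟩)

end MLL

namespace MLL

open SimpleGraph

lemma adj_iff {Γ : Sequent} {lk : Linking} {σ : Switching} {x y : ℕ} :
    (switchGraph Γ lk σ).Adj x y ↔
      x ≠ y ∧ (switchAdj Γ lk σ x y ∨ switchAdj Γ lk σ y x) := by
  rw [switchGraph]
  exact SimpleGraph.fromRel_adj _ _ _

lemma main {Γ : Sequent} {π : Proof Γ} {lk : Linking} (h : Translates π lk) :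
    WellNamed Γ →
    ValidLinking Γ lk ∧ ∀ σ : Switching, (switchGraph Γ lk σ).IsAcyclic ∧
      MLLAux.ReachOn (switchGraph Γ lk σ) ↑(seqNames Γ) := by
  induction h with
  | @one n lk =>
    intro _
    have hns : ∀ S, HasSub {Formula.one n} S → S = Formula.one n := by
      intro S hS
      simpa [HasSub, seqSubs, Multiset.singleton_bind, Formula.subs] using hS
    have hval : ValidLinking {Formula.one n} lk := by
      intro a ha
      exact absurd (hns _ ha) (by simp)
    refine ⟨hval, fun σ => ?_⟩
    have hno : ∀ x y : ℕ, ¬ (switchGraph {Formula.one n} lk σ).Adj x y := by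
      intro x y hxy
      rcases (adj_iff.mp hxy).2 with h' | h' <;>
        rcases h' with ⟨A, B, hs, _⟩ | ⟨A, B, hs, _⟩ | ⟨hb, _⟩ <;>
          first
            | exact absurd (hns _ hs) (by simp)
            | exact absurd (hns _ hb) (by simp)
    constructor
    · intro v c hc
      cases c with
      | nil => exact Walk.IsCycle.not_of_nil hc
      | cons hadj q => exact hno _ _ hadj
    · intro x hx y hy
      have hx' : x = n := by
        have := Finset.mem_coe.mp hx
        simpa [seqNames, Formula.names, Multiset.sup_singleton] using this
      have hy' : y = n := by
        have := Finset.mem_coe.mp hy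
        simpa [seqNames, Formula.names, Multiset.sup_singleton] using this
      rw [hx', hy']
  | @bot Γ n π lk hlkn htr ih =>
    intro hW
    obtain ⟨hWΓ, hfresh⟩ := wellNamed_bot hW
    obtain ⟨hv, htree⟩ := ih hWΓ
    have hmono_sub : ∀ S, HasSub Γ S → HasSub (Formula.bot n ::ₘ Γ) S := by
      intro S hS
      rw [HasSub, seqSubs_bot]
      exact Multiset.mem_cons_of_mem hS
    have hval : ValidLinking (Formula.bot n ::ₘ Γ) lk := by
      intro a ha
      rw [seqNames_bot]
      rw [IsBotName, HasSub, seqSubs_bot, Multiset.mem_cons] at ha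
      rcases ha with ha | ha
      · have han : a = n := by injection ha
        subst han
        exact Finset.mem_insert_of_mem hlkn
      · exact Finset.mem_insert_of_mem (hv a ha)
    refine ⟨hval, fun σ => ?_⟩
    obtain ⟨hac, hre⟩ := htree σ
    have hclass := fun {x y : ℕ} (h' : switchAdj (Formula.bot n ::ₘ Γ) lk σ x y) =>
      classify_bot (σ := σ) hv h'
    have hlkns : (lk n : ℕ) ∈ (↑(seqNames Γ) : Set ℕ) := Finset.mem_coe.mpr hlkn
    have hns : (n : ℕ) ∉ (↑(seqNames Γ) : Set ℕ) := fun hc => hfresh (Finset.mem_coe.mp hc)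
    have hd : ∀ x : ℕ, x ∈ (↑(seqNames Γ) : Set ℕ) → x ∈ ({n} : Set ℕ) → False := by
      intro x hx1 hx2
      rw [Set.mem_singleton_iff] at hx2
      subst hx2
      exact hns hx1
    have hE : ∀ ⦃x y : ℕ⦄, (switchGraph (Formula.bot n ::ₘ Γ) lk σ).Adj x y →
        x ∈ ((↑(seqNames Γ) : Set ℕ) ∪ {n}) → y ∈ ((↑(seqNames Γ) : Set ℕ) ∪ {n}) →
        (x ∈ (↑(seqNames Γ) : Set ℕ) ∧ y ∈ (↑(seqNames Γ) : Set ℕ)) ∨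
        (x ∈ ({n} : Set ℕ) ∧ y ∈ ({n} : Set ℕ)) ∨ s(x, y) = s(lk n, n) := by
      intro x y hxy _ _
      rcases (adj_iff.mp hxy).2 with h' | h'
      · rcases hclass h' with ⟨hx, hy, _⟩ | ⟨rfl, rfl⟩
        · exact Or.inl ⟨Finset.mem_coe.mpr hx, Finset.mem_coe.mpr hy⟩
        · exact Or.inr (Or.inr Sym2.eq_swap)
      · rcases hclass h' with ⟨hy, hx, _⟩ | ⟨rfl, rfl⟩
        · exact Or.inl ⟨Finset.mem_coe.mpr hx, Finset.mem_coe.mpr hy⟩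
        · exact Or.inr (Or.inr rfl)
    have hagree : ∀ ⦃x y : ℕ⦄, x ∈ (↑(seqNames Γ) : Set ℕ) → y ∈ (↑(seqNames Γ) : Set ℕ) →
        (switchGraph (Formula.bot n ::ₘ Γ) lk σ).Adj x y → (switchGraph Γ lk σ).Adj x y := by
      intro x y hx hy hxy
      obtain ⟨hne, h'⟩ := adj_iff.mp hxy
      refine adj_iff.mpr ⟨hne, ?_⟩
      rcases h' with h' | h'
      · rcases hclass h' with ⟨_, _, h''⟩ | ⟨rfl, _⟩
        · exact Or.inl h''
        · exact absurd hx hns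
      · rcases hclass h' with ⟨_, _, h''⟩ | ⟨rfl, _⟩
        · exact Or.inr h''
        · exact absurd hy hns
    have hmono : ∀ ⦃x y : ℕ⦄, (switchGraph Γ lk σ).Adj x y →
        (switchGraph (Formula.bot n ::ₘ Γ) lk σ).Adj x y := by
      intro x y hxy
      obtain ⟨hne, h'⟩ := adj_iff.mp hxy
      exact adj_iff.mpr ⟨hne, h'.imp (switchAdj_mono hmono_sub) (switchAdj_mono hmono_sub)⟩
    have hEnames : ∀ ⦃x y : ℕ⦄, (switchGraph (Formula.bot n ::ₘ Γ) lk σ).Adj x y →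
        x ∈ ((↑(seqNames Γ) : Set ℕ) ∪ {n}) ∧ y ∈ ((↑(seqNames Γ) : Set ℕ) ∪ {n}) := by
      intro x y hxy
      rcases (adj_iff.mp hxy).2 with h' | h'
      · rcases hclass h' with ⟨hx, hy, _⟩ | ⟨rfl, rfl⟩
        · exact ⟨Set.mem_union_left _ (Finset.mem_coe.mpr hx),
            Set.mem_union_left _ (Finset.mem_coe.mpr hy)⟩
        · exact ⟨Set.mem_union_right _ rfl, Set.mem_union_left _ hlkns⟩
      · rcases hclass h' with ⟨hy, hx, _⟩ | ⟨rfl, rfl⟩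
        · exact ⟨Set.mem_union_left _ (Finset.mem_coe.mpr hx),
            Set.mem_union_left _ (Finset.mem_coe.mpr hy)⟩
        · exact ⟨Set.mem_union_left _ hlkns, Set.mem_union_right _ rfl⟩
    have hbotname : IsBotName (Formula.bot n ::ₘ Γ) n := by
      rw [IsBotName, HasSub, seqSubs_bot]
      exact Multiset.mem_cons_self _ _
    have hadjcross : (switchGraph (Formula.bot n ::ₘ Γ) lk σ).Adj (lk n) n := by
      refine adj_iff.mpr ⟨fun hq => hns (hq ▸ hlkns), Or.inr (Or.inr (Or.inr ⟨hbotname, rfl⟩))⟩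
    constructor
    · exact MLLAux.isAcyclic_of_noCycOn hEnames
        (MLLAux.noCycOn_union hd hlkns rfl hE (MLLAux.noCycOn_of_agree hagree hac)
          (MLLAux.noCycOn_singleton _ n))
    · have hseteq : (↑(seqNames (Formula.bot n ::ₘ Γ)) : Set ℕ) =
          (↑(seqNames Γ) : Set ℕ) ∪ {n} := by
        rw [seqNames_bot, Finset.coe_insert, Set.insert_eq, Set.union_comm]
      rw [hseteq]
      exact MLLAux.reachOn_union hlkns rfl hadjcross.reachable
        (MLLAux.reachOn_mono hmono hre) (MLLAux.reachOn_singleton _ n)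
  | @parr Γ A B n π lk htr ih =>
    intro hW
    obtain ⟨hWP, hfresh⟩ := wellNamed_parr hW
    obtain ⟨hv, htree⟩ := ih hWP
    have hmono_sub : ∀ S, HasSub (A ::ₘ B ::ₘ Γ) S →
        HasSub (Formula.parr n A B ::ₘ Γ) S := by
      intro S hS
      rw [HasSub, seqSubs_parr]
      exact Multiset.mem_cons_of_mem hS
    have hval : ValidLinking (Formula.parr n A B ::ₘ Γ) lk := by
      intro a ha
      rw [seqNames_parr]
      rw [IsBotName, HasSub, seqSubs_parr, Multiset.mem_cons] at ha
      rcases ha with ha | ha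
      · exact absurd ha (by simp)
      · exact Finset.mem_insert_of_mem (hv a ha)
    refine ⟨hval, fun σ => ?_⟩
    obtain ⟨hac, hre⟩ := htree σ
    have hclass := fun {x y : ℕ} (h' : switchAdj (Formula.parr n A B ::ₘ Γ) lk σ x y) =>
      classify_parr (σ := σ) hv h'
    have hstar : (if σ n then A.name else B.name) ∈ seqNames (A ::ₘ B ::ₘ Γ) := by
      by_cases hσ : σ n
      · simp only [hσ, if_true]
        rw [seqNames_cons]
        exact Finset.mem_union_left _ (name_mem_names A)
      · simp only [hσ, if_false]
        rw [seqNames_cons, seqNames_cons]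
        exact Finset.mem_union_right _ (Finset.mem_union_left _ (name_mem_names B))
    have hstars : (if σ n then A.name else B.name) ∈
        (↑(seqNames (A ::ₘ B ::ₘ Γ)) : Set ℕ) := Finset.mem_coe.mpr hstar
    have hns : (n : ℕ) ∉ (↑(seqNames (A ::ₘ B ::ₘ Γ)) : Set ℕ) :=
      fun hc => hfresh (Finset.mem_coe.mp hc)
    have hd : ∀ x : ℕ, x ∈ (↑(seqNames (A ::ₘ B ::ₘ Γ)) : Set ℕ) →
        x ∈ ({n} : Set ℕ) → False := by
      intro x hx1 hx2
      rw [Set.mem_singleton_iff] at hx2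
      subst hx2
      exact hns hx1
    have hE : ∀ ⦃x y : ℕ⦄, (switchGraph (Formula.parr n A B ::ₘ Γ) lk σ).Adj x y →
        x ∈ ((↑(seqNames (A ::ₘ B ::ₘ Γ)) : Set ℕ) ∪ {n}) →
        y ∈ ((↑(seqNames (A ::ₘ B ::ₘ Γ)) : Set ℕ) ∪ {n}) →
        (x ∈ (↑(seqNames (A ::ₘ B ::ₘ Γ)) : Set ℕ) ∧
          y ∈ (↑(seqNames (A ::ₘ B ::ₘ Γ)) : Set ℕ)) ∨
        (x ∈ ({n} : Set ℕ) ∧ y ∈ ({n} : Set ℕ)) ∨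
        s(x, y) = s(if σ n then A.name else B.name, n) := by
      intro x y hxy _ _
      rcases (adj_iff.mp hxy).2 with h' | h'
      · rcases hclass h' with ⟨hx, hy, _⟩ | ⟨rfl, rfl⟩
        · exact Or.inl ⟨Finset.mem_coe.mpr hx, Finset.mem_coe.mpr hy⟩
        · exact Or.inr (Or.inr Sym2.eq_swap)
      · rcases hclass h' with ⟨hy, hx, _⟩ | ⟨rfl, rfl⟩
        · exact Or.inl ⟨Finset.mem_coe.mpr hx, Finset.mem_coe.mpr hy⟩
        · exact Or.inr (Or.inr rfl)
    have hagree : ∀ ⦃x y : ℕ⦄, x ∈ (↑(seqNames (A ::ₘ B ::ₘ Γ)) : Set ℕ) →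
        y ∈ (↑(seqNames (A ::ₘ B ::ₘ Γ)) : Set ℕ) →
        (switchGraph (Formula.parr n A B ::ₘ Γ) lk σ).Adj x y →
        (switchGraph (A ::ₘ B ::ₘ Γ) lk σ).Adj x y := by
      intro x y hx hy hxy
      obtain ⟨hne, h'⟩ := adj_iff.mp hxy
      refine adj_iff.mpr ⟨hne, ?_⟩
      rcases h' with h' | h'
      · rcases hclass h' with ⟨_, _, h''⟩ | ⟨rfl, _⟩
        · exact Or.inl h''
        · exact absurd hx hns
      · rcases hclass h' with ⟨_, _, h''⟩ | ⟨rfl, _⟩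
        · exact Or.inr h''
        · exact absurd hy hns
    have hmono : ∀ ⦃x y : ℕ⦄, (switchGraph (A ::ₘ B ::ₘ Γ) lk σ).Adj x y →
        (switchGraph (Formula.parr n A B ::ₘ Γ) lk σ).Adj x y := by
      intro x y hxy
      obtain ⟨hne, h'⟩ := adj_iff.mp hxy
      exact adj_iff.mpr ⟨hne, h'.imp (switchAdj_mono hmono_sub) (switchAdj_mono hmono_sub)⟩
    have hEnames : ∀ ⦃x y : ℕ⦄, (switchGraph (Formula.parr n A B ::ₘ Γ) lk σ).Adj x y →
        x ∈ ((↑(seqNames (A ::ₘ B ::ₘ Γ)) : Set ℕ) ∪ {n}) ∧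
        y ∈ ((↑(seqNames (A ::ₘ B ::ₘ Γ)) : Set ℕ) ∪ {n}) := by
      intro x y hxy
      rcases (adj_iff.mp hxy).2 with h' | h'
      · rcases hclass h' with ⟨hx, hy, _⟩ | ⟨rfl, rfl⟩
        · exact ⟨Set.mem_union_left _ (Finset.mem_coe.mpr hx),
            Set.mem_union_left _ (Finset.mem_coe.mpr hy)⟩
        · exact ⟨Set.mem_union_right _ rfl, Set.mem_union_left _ hstars⟩
      · rcases hclass h' with ⟨hy, hx, _⟩ | ⟨rfl, rfl⟩
        · exact ⟨Set.mem_union_left _ (Finset.mem_coe.mpr hx),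
            Set.mem_union_left _ (Finset.mem_coe.mpr hy)⟩
        · exact ⟨Set.mem_union_left _ hstars, Set.mem_union_right _ rfl⟩
    have hhead : HasSub (Formula.parr n A B ::ₘ Γ) (Formula.parr n A B) := by
      rw [HasSub, seqSubs_parr]
      exact Multiset.mem_cons_self _ _
    have hadjcross : (switchGraph (Formula.parr n A B ::ₘ Γ) lk σ).Adj
        (if σ n then A.name else B.name) n := by
      refine adj_iff.mpr ⟨fun hq => hns (hq ▸ hstars),
        Or.inr (Or.inr (Or.inl ⟨A, B, hhead, rfl⟩))⟩
    constructor
    · exact MLLAux.isAcyclic_of_noCycOn hEnames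
        (MLLAux.noCycOn_union hd hstars rfl hE (MLLAux.noCycOn_of_agree hagree hac)
          (MLLAux.noCycOn_singleton _ n))
    · have hseteq : (↑(seqNames (Formula.parr n A B ::ₘ Γ)) : Set ℕ) =
          (↑(seqNames (A ::ₘ B ::ₘ Γ)) : Set ℕ) ∪ {n} := by
        rw [seqNames_parr, Finset.coe_insert, Set.insert_eq, Set.union_comm]
      rw [hseteq]
      exact MLLAux.reachOn_union hstars rfl hadjcross.reachable
        (MLLAux.reachOn_mono hmono hre) (MLLAux.reachOn_singleton _ n)
  | @tens Γ Δ A B n π₁ π₂ lk htr₁ htr₂ ih₁ ih₂ =>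
    intro hW
    obtain ⟨hW₁, hW₂, hf₁, hf₂, hdisj⟩ := wellNamed_tens hW
    obtain ⟨hv₁, ht₁⟩ := ih₁ hW₁
    obtain ⟨hv₂, ht₂⟩ := ih₂ hW₂
    have hsub₁ : ∀ S, HasSub (A ::ₘ Γ) S → HasSub (Formula.tens n A B ::ₘ (Γ + Δ)) S := by
      intro S hS
      rw [HasSub, seqSubs_tens]
      exact Multiset.mem_cons_of_mem (Multiset.mem_add.mpr (Or.inl hS))
    have hsub₂ : ∀ S, HasSub (B ::ₘ Δ) S → HasSub (Formula.tens n A B ::ₘ (Γ + Δ)) S := by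
      intro S hS
      rw [HasSub, seqSubs_tens]
      exact Multiset.mem_cons_of_mem (Multiset.mem_add.mpr (Or.inr hS))
    have hval : ValidLinking (Formula.tens n A B ::ₘ (Γ + Δ)) lk := by
      intro a ha
      rw [seqNames_tens]
      rw [IsBotName, HasSub, seqSubs_tens, Multiset.mem_cons, Multiset.mem_add] at ha
      rcases ha with ha | ha | ha
      · exact absurd ha (by simp)
      · exact Finset.mem_insert_of_mem (Finset.mem_union_left _ (hv₁ a ha))
      · exact Finset.mem_insert_of_mem (Finset.mem_union_right _ (hv₂ a ha))
    refine ⟨hval, fun σ => ?_⟩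
    obtain ⟨hac₁, hre₁⟩ := ht₁ σ
    obtain ⟨hac₂, hre₂⟩ := ht₂ σ
    have hclass := fun {x y : ℕ}
        (h' : switchAdj (Formula.tens n A B ::ₘ (Γ + Δ)) lk σ x y) =>
      classify_tens (σ := σ) hv₁ hv₂ h'
    have hAn : A.name ∈ seqNames (A ::ₘ Γ) := by
      rw [seqNames_cons]
      exact Finset.mem_union_left _ (name_mem_names A)
    have hBn : B.name ∈ seqNames (B ::ₘ Δ) := by
      rw [seqNames_cons]
      exact Finset.mem_union_left _ (name_mem_names B)
    have hAns : (A.name : ℕ) ∈ (↑(seqNames (A ::ₘ Γ)) : Set ℕ) := Finset.mem_coe.mpr hAn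
    have hBns : (B.name : ℕ) ∈ (↑(seqNames (B ::ₘ Δ)) : Set ℕ) := Finset.mem_coe.mpr hBn
    have hnf₁ : (n : ℕ) ∉ (↑(seqNames (A ::ₘ Γ)) : Set ℕ) :=
      fun hc => hf₁ (Finset.mem_coe.mp hc)
    have hnf₂ : (n : ℕ) ∉ (↑(seqNames (B ::ₘ Δ)) : Set ℕ) :=
      fun hc => hf₂ (Finset.mem_coe.mp hc)
    have hdisjS : ∀ x : ℕ, x ∈ (↑(seqNames (A ::ₘ Γ)) : Set ℕ) →
        x ∈ (↑(seqNames (B ::ₘ Δ)) : Set ℕ) → False :=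
      fun x h1 h2 => hdisj x (Finset.mem_coe.mp h1) (Finset.mem_coe.mp h2)
    have hd₁ : ∀ x : ℕ, x ∈ (↑(seqNames (A ::ₘ Γ)) : Set ℕ) → x ∈ ({n} : Set ℕ) → False := by
      intro x hx1 hx2
      rw [Set.mem_singleton_iff] at hx2
      subst hx2
      exact hnf₁ hx1
    have hd₂ : ∀ x : ℕ, x ∈ ((↑(seqNames (A ::ₘ Γ)) : Set ℕ) ∪ {n}) →
        x ∈ (↑(seqNames (B ::ₘ Δ)) : Set ℕ) → False := by
      intro x hx1 hx2
      rcases hx1 with hx1 | hx1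
      · exact hdisjS x hx1 hx2
      · rw [Set.mem_singleton_iff] at hx1
        subst hx1
        exact hnf₂ hx2
    have hhead : HasSub (Formula.tens n A B ::ₘ (Γ + Δ)) (Formula.tens n A B) := by
      rw [HasSub, seqSubs_tens]
      exact Multiset.mem_cons_self _ _
    -- hE₁ : edges inside N₁ ∪ {n}
    have hE₁ : ∀ ⦃x y : ℕ⦄, (switchGraph (Formula.tens n A B ::ₘ (Γ + Δ)) lk σ).Adj x y →
        x ∈ ((↑(seqNames (A ::ₘ Γ)) : Set ℕ) ∪ {n}) →
        y ∈ ((↑(seqNames (A ::ₘ Γ)) : Set ℕ) ∪ {n}) →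
        (x ∈ (↑(seqNames (A ::ₘ Γ)) : Set ℕ) ∧ y ∈ (↑(seqNames (A ::ₘ Γ)) : Set ℕ)) ∨
        (x ∈ ({n} : Set ℕ) ∧ y ∈ ({n} : Set ℕ)) ∨ s(x, y) = s(A.name, n) := by
      intro x y hxy hxu hyu
      rcases (adj_iff.mp hxy).2 with h' | h'
      · rcases hclass h' with ⟨hx, hy, _⟩ | ⟨hx, hy, _⟩ | ⟨rfl, hy⟩
        · exact Or.inl ⟨Finset.mem_coe.mpr hx, Finset.mem_coe.mpr hy⟩
        · exact absurd hxu (fun hu => hd₂ x hu (Finset.mem_coe.mpr hx))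
        · rcases hy with rfl | rfl
          · exact Or.inr (Or.inr Sym2.eq_swap)
          · exact absurd hyu (fun hu => hd₂ _ hu hBns)
      · rcases hclass h' with ⟨hy, hx, _⟩ | ⟨hy, hx, _⟩ | ⟨rfl, hx⟩
        · exact Or.inl ⟨Finset.mem_coe.mpr hx, Finset.mem_coe.mpr hy⟩
        · exact absurd hxu (fun hu => hd₂ x hu (Finset.mem_coe.mpr hx))
        · rcases hx with rfl | rfl
          · exact Or.inr (Or.inr rfl)
          · exact absurd hxu (fun hu => hd₂ _ hu hBns)
    -- hE₂ : edges inside (N₁ ∪ {n}) ∪ N₂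
    have hE₂ : ∀ ⦃x y : ℕ⦄, (switchGraph (Formula.tens n A B ::ₘ (Γ + Δ)) lk σ).Adj x y →
        x ∈ (((↑(seqNames (A ::ₘ Γ)) : Set ℕ) ∪ {n}) ∪ (↑(seqNames (B ::ₘ Δ)) : Set ℕ)) →
        y ∈ (((↑(seqNames (A ::ₘ Γ)) : Set ℕ) ∪ {n}) ∪ (↑(seqNames (B ::ₘ Δ)) : Set ℕ)) →
        (x ∈ ((↑(seqNames (A ::ₘ Γ)) : Set ℕ) ∪ {n}) ∧
          y ∈ ((↑(seqNames (A ::ₘ Γ)) : Set ℕ) ∪ {n})) ∨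
        (x ∈ (↑(seqNames (B ::ₘ Δ)) : Set ℕ) ∧ y ∈ (↑(seqNames (B ::ₘ Δ)) : Set ℕ)) ∨
        s(x, y) = s(n, B.name) := by
      intro x y hxy _ _
      rcases (adj_iff.mp hxy).2 with h' | h'
      · rcases hclass h' with ⟨hx, hy, _⟩ | ⟨hx, hy, _⟩ | ⟨rfl, hy⟩
        · exact Or.inl ⟨Set.mem_union_left _ (Finset.mem_coe.mpr hx),
            Set.mem_union_left _ (Finset.mem_coe.mpr hy)⟩
        · exact Or.inr (Or.inl ⟨Finset.mem_coe.mpr hx, Finset.mem_coe.mpr hy⟩)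
        · rcases hy with rfl | rfl
          · exact Or.inl ⟨Set.mem_union_right _ rfl, Set.mem_union_left _ hAns⟩
          · exact Or.inr (Or.inr rfl)
      · rcases hclass h' with ⟨hy, hx, _⟩ | ⟨hy, hx, _⟩ | ⟨rfl, hx⟩
        · exact Or.inl ⟨Set.mem_union_left _ (Finset.mem_coe.mpr hx),
            Set.mem_union_left _ (Finset.mem_coe.mpr hy)⟩
        · exact Or.inr (Or.inl ⟨Finset.mem_coe.mpr hx, Finset.mem_coe.mpr hy⟩)
        · rcases hx with rfl | rfl
          · exact Or.inl ⟨Set.mem_union_left _ hAns, Set.mem_union_right _ rfl⟩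
          · exact Or.inr (Or.inr Sym2.eq_swap)
    have hagree₁ : ∀ ⦃x y : ℕ⦄, x ∈ (↑(seqNames (A ::ₘ Γ)) : Set ℕ) →
        y ∈ (↑(seqNames (A ::ₘ Γ)) : Set ℕ) →
        (switchGraph (Formula.tens n A B ::ₘ (Γ + Δ)) lk σ).Adj x y →
        (switchGraph (A ::ₘ Γ) lk σ).Adj x y := by
      intro x y hx hy hxy
      obtain ⟨hne, h'⟩ := adj_iff.mp hxy
      refine adj_iff.mpr ⟨hne, ?_⟩
      rcases h' with h' | h'
      · rcases hclass h' with ⟨_, _, h''⟩ | ⟨hx2, _, _⟩ | ⟨rfl, _⟩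
        · exact Or.inl h''
        · exact absurd hx (fun hc => hdisjS x hc (Finset.mem_coe.mpr hx2))
        · exact absurd hx hnf₁
      · rcases hclass h' with ⟨_, _, h''⟩ | ⟨hy2, _, _⟩ | ⟨rfl, _⟩
        · exact Or.inr h''
        · exact absurd hy (fun hc => hdisjS y hc (Finset.mem_coe.mpr hy2))
        · exact absurd hy hnf₁
    have hagree₂ : ∀ ⦃x y : ℕ⦄, x ∈ (↑(seqNames (B ::ₘ Δ)) : Set ℕ) →
        y ∈ (↑(seqNames (B ::ₘ Δ)) : Set ℕ) →
        (switchGraph (Formula.tens n A B ::ₘ (Γ + Δ)) lk σ).Adj x y →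
        (switchGraph (B ::ₘ Δ) lk σ).Adj x y := by
      intro x y hx hy hxy
      obtain ⟨hne, h'⟩ := adj_iff.mp hxy
      refine adj_iff.mpr ⟨hne, ?_⟩
      rcases h' with h' | h'
      · rcases hclass h' with ⟨hx2, _, _⟩ | ⟨_, _, h''⟩ | ⟨rfl, _⟩
        · exact absurd hx (fun hc => hdisjS x (Finset.mem_coe.mpr hx2) hc)
        · exact Or.inl h''
        · exact absurd hx hnf₂
      · rcases hclass h' with ⟨hy2, _, _⟩ | ⟨_, _, h''⟩ | ⟨rfl, _⟩
        · exact absurd hy (fun hc => hdisjS y (Finset.mem_coe.mpr hy2) hc)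
        · exact Or.inr h''
        · exact absurd hy hnf₂
    have hmono₁ : ∀ ⦃x y : ℕ⦄, (switchGraph (A ::ₘ Γ) lk σ).Adj x y →
        (switchGraph (Formula.tens n A B ::ₘ (Γ + Δ)) lk σ).Adj x y := by
      intro x y hxy
      obtain ⟨hne, h'⟩ := adj_iff.mp hxy
      exact adj_iff.mpr ⟨hne, h'.imp (switchAdj_mono hsub₁) (switchAdj_mono hsub₁)⟩
    have hmono₂ : ∀ ⦃x y : ℕ⦄, (switchGraph (B ::ₘ Δ) lk σ).Adj x y →
        (switchGraph (Formula.tens n A B ::ₘ (Γ + Δ)) lk σ).Adj x y := by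
      intro x y hxy
      obtain ⟨hne, h'⟩ := adj_iff.mp hxy
      exact adj_iff.mpr ⟨hne, h'.imp (switchAdj_mono hsub₂) (switchAdj_mono hsub₂)⟩
    have hEnames : ∀ ⦃x y : ℕ⦄, (switchGraph (Formula.tens n A B ::ₘ (Γ + Δ)) lk σ).Adj x y →
        x ∈ (((↑(seqNames (A ::ₘ Γ)) : Set ℕ) ∪ {n}) ∪ (↑(seqNames (B ::ₘ Δ)) : Set ℕ)) ∧
        y ∈ (((↑(seqNames (A ::ₘ Γ)) : Set ℕ) ∪ {n}) ∪ (↑(seqNames (B ::ₘ Δ)) : Set ℕ)) := by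
      intro x y hxy
      have inl1 : ∀ {z : ℕ}, z ∈ seqNames (A ::ₘ Γ) →
          z ∈ (((↑(seqNames (A ::ₘ Γ)) : Set ℕ) ∪ {n}) ∪ (↑(seqNames (B ::ₘ Δ)) : Set ℕ)) :=
        fun hz => Set.mem_union_left _ (Set.mem_union_left _ (Finset.mem_coe.mpr hz))
      have inl2 : ∀ {z : ℕ}, z ∈ seqNames (B ::ₘ Δ) →
          z ∈ (((↑(seqNames (A ::ₘ Γ)) : Set ℕ) ∪ {n}) ∪ (↑(seqNames (B ::ₘ Δ)) : Set ℕ)) :=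
        fun hz => Set.mem_union_right _ (Finset.mem_coe.mpr hz)
      have inn : (n : ℕ) ∈
          (((↑(seqNames (A ::ₘ Γ)) : Set ℕ) ∪ {n}) ∪ (↑(seqNames (B ::ₘ Δ)) : Set ℕ)) :=
        Set.mem_union_left _ (Set.mem_union_right _ rfl)
      rcases (adj_iff.mp hxy).2 with h' | h'
      · rcases hclass h' with ⟨hx, hy, _⟩ | ⟨hx, hy, _⟩ | ⟨rfl, hy⟩
        · exact ⟨inl1 hx, inl1 hy⟩
        · exact ⟨inl2 hx, inl2 hy⟩
        · rcases hy with rfl | rfl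
          · exact ⟨inn, inl1 hAn⟩
          · exact ⟨inn, inl2 hBn⟩
      · rcases hclass h' with ⟨hy, hx, _⟩ | ⟨hy, hx, _⟩ | ⟨rfl, hx⟩
        · exact ⟨inl1 hx, inl1 hy⟩
        · exact ⟨inl2 hx, inl2 hy⟩
        · rcases hx with rfl | rfl
          · exact ⟨inl1 hAn, inn⟩
          · exact ⟨inl2 hBn, inn⟩
    have hadjA : (switchGraph (Formula.tens n A B ::ₘ (Γ + Δ)) lk σ).Adj A.name n := by
      refine adj_iff.mpr ⟨fun hq => hnf₁ (hq ▸ hAns),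
        Or.inr (Or.inl ⟨A, B, hhead, Or.inl rfl⟩)⟩
    have hadjB : (switchGraph (Formula.tens n A B ::ₘ (Γ + Δ)) lk σ).Adj n B.name := by
      refine adj_iff.mpr ⟨fun hq => hnf₂ (hq.symm ▸ hBns),
        Or.inl (Or.inl ⟨A, B, hhead, Or.inr rfl⟩)⟩
    have hg1 : MLLAux.NoCycOn (switchGraph (Formula.tens n A B ::ₘ (Γ + Δ)) lk σ)
        ((↑(seqNames (A ::ₘ Γ)) : Set ℕ) ∪ {n}) :=
      MLLAux.noCycOn_union hd₁ hAns rfl hE₁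
        (MLLAux.noCycOn_of_agree hagree₁ hac₁) (MLLAux.noCycOn_singleton _ n)
    have hg2 : MLLAux.NoCycOn (switchGraph (Formula.tens n A B ::ₘ (Γ + Δ)) lk σ)
        (((↑(seqNames (A ::ₘ Γ)) : Set ℕ) ∪ {n}) ∪ (↑(seqNames (B ::ₘ Δ)) : Set ℕ)) :=
      MLLAux.noCycOn_union hd₂ (Set.mem_union_right _ rfl) hBns hE₂ hg1
        (MLLAux.noCycOn_of_agree hagree₂ hac₂)
    constructor
    · exact MLLAux.isAcyclic_of_noCycOn hEnames hg2
    · have hseteq : (↑(seqNames (Formula.tens n A B ::ₘ (Γ + Δ))) : Set ℕ) =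
          ((↑(seqNames (A ::ₘ Γ)) : Set ℕ) ∪ {n}) ∪ (↑(seqNames (B ::ₘ Δ)) : Set ℕ) := by
        rw [seqNames_tens]
        ext x
        simp only [Finset.coe_insert, Set.mem_insert_iff, Finset.coe_union,
          Set.mem_union, Finset.mem_coe, Set.mem_singleton_iff]
        tauto
      rw [hseteq]
      exact MLLAux.reachOn_union (Set.mem_union_right _ rfl) hBns hadjB.reachable
        (MLLAux.reachOn_union hAns rfl hadjA.reachable
          (MLLAux.reachOn_mono hmono₁ hre₁) (MLLAux.reachOn_singleton _ n))
        (MLLAux.reachOn_mono hmono₂ hre₂)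

lemma proof_names_nonempty : ∀ {Γ : Sequent}, Proof Γ → ∃ m, m ∈ seqNames Γ := by
  intro Γ π
  cases π with
  | one m =>
    exact ⟨m, by simp [seqNames, Formula.names, Multiset.sup_singleton]⟩
  | @bot m Γ' _ =>
    exact ⟨m, by rw [seqNames_bot]; exact Finset.mem_insert_self _ _⟩
  | @parr m Γ' A B _ =>
    exact ⟨m, by rw [seqNames_parr]; exact Finset.mem_insert_self _ _⟩
  | @tens m Γ' Δ' A B _ _ =>
    exact ⟨m, by rw [seqNames_tens]; exact Finset.mem_insert_self _ _⟩

lemma switchAdj_names {Γ : Sequent} {lk : Linking} {σ : Switching} {x y : ℕ}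
    (hv : ValidLinking Γ lk) (h : switchAdj Γ lk σ x y) :
    x ∈ seqNames Γ ∧ y ∈ seqNames Γ := by
  rcases h with ⟨A, B, hs, hy⟩ | ⟨A, B, hs, hy⟩ | ⟨hb, hy⟩
  · refine ⟨hasSub_name_mem hs, ?_⟩
    rcases hy with rfl | rfl
    · exact hasSub_name_mem (hasSub_tens_left hs)
    · exact hasSub_name_mem (hasSub_tens_right hs)
  · refine ⟨hasSub_name_mem hs, ?_⟩
    subst hy
    by_cases hσ : σ x
    · simp only [hσ, if_true]
      exact hasSub_name_mem (hasSub_parr_left hs)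
    · simp only [hσ, if_false]
      exact hasSub_name_mem (hasSub_parr_right hs)
  · exact ⟨hasSub_name_mem hb, by rw [hy]; exact hv x hb⟩

end MLL

open MLL in
/-- If `Π` is a cut-free, identity-free proof of a sequent `Γ` in
unit-only MLL and `Π ⇒ λ`, then `(Γ, λ)` is a proof net, i.e. `λ` is a correct
linking for `Γ`. -/
theorem mll_translation_correct {Γ : Sequent} (hW : WellNamed Γ)
    (π : Proof Γ) (lk : Linking) (h : Translates π lk) :
    Correct Γ lk := by
  obtain ⟨hv, htree⟩ := MLL.main h hW
  refine ⟨hv, fun σ => ?_⟩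
  obtain ⟨hac, hre⟩ := htree σ
  have hEnames : ∀ ⦃x y : ℕ⦄, (switchGraph Γ lk σ).Adj x y →
      x ∈ {x : ℕ | x ∈ seqNames Γ} ∧ y ∈ {x : ℕ | x ∈ seqNames Γ} := by
    intro x y hxy
    rcases (MLL.adj_iff.mp hxy).2 with h' | h'
    · exact ⟨(MLL.switchAdj_names hv h').1, (MLL.switchAdj_names hv h').2⟩
    · exact ⟨(MLL.switchAdj_names hv h').2, (MLL.switchAdj_names hv h').1⟩
  refine ⟨?_, MLLAux.isAcyclic_induce hac⟩
  obtain ⟨m, hm⟩ := MLL.proof_names_nonempty π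
  haveI : Nonempty {x : ℕ | x ∈ seqNames Γ} := ⟨⟨m, hm⟩⟩
  refine SimpleGraph.Connected.mk ?_
  rintro ⟨x, hx⟩ ⟨y, hy⟩
  obtain ⟨p⟩ := hre (Finset.mem_coe.mpr hx) (Finset.mem_coe.mpr hy)
  exact MLLAux.reachable_induce hEnames p hx hy
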